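/- For q ∈ ℝ with |q| < 1, in any *-representation π of the q-CCR algebra (generated by a_1,…,a_n with relations a_i* a_j = δ_{ij}·1 + q·a_j a_i*) by bounded operators on a Hilbert space, one has ‖π(a_i)‖ ≤ 1/√(1−|q|) for each i. -/

import Mathlib

/-- In any *-representation of the q-CCR relations
`aᵢ* aⱼ = δᵢⱼ·1 + q·aⱼ aᵢ*` by bounded operators on a Hilbert space,
each generator satisfies `‖aᵢ‖ ≤ 1/√(1-|q|)`. -/
theorem qCCR_norm_bound {H : Type*} [NormedAddCommGroup H] [InnerProductSpace ℂ H]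
    [CompleteSpace H] (n : ℕ) (q : ℝ) (hq : |q| < 1) (a : Fin n → H →L[ℂ] H)
    (hrel : ∀ i j, star (a i) * a j =
      (if i = j then (1 : H →L[ℂ] H) else 0) + (q : ℂ) • (a j * star (a i))) :
    ∀ i, ‖a i‖ ≤ 1 / Real.sqrt (1 - |q|) := by
  intro i
  have h1q : (0:ℝ) < 1 - |q| := by linarith
  have hrel' := hrel i i
  simp only [if_pos rfl, if_true] at hrel'
  set t := ‖a i‖ with ht
  have ht0 : 0 ≤ t := norm_nonneg _
  have hC : ‖star (a i) * a i‖ = t * t := CStarRing.norm_star_mul_self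
  have hC' : ‖a i * star (a i)‖ = t * t := by
    have := CStarRing.norm_self_mul_star (x := a i)
    simpa using this
  have hbound : t * t ≤ 1 + |q| * (t * t) := by
    calc t * t = ‖star (a i) * a i‖ := hC.symm
    _ = ‖(1 : H →L[ℂ] H) + (q : ℂ) • (a i * star (a i))‖ := by rw [hrel']
    _ ≤ ‖(1 : H →L[ℂ] H)‖ + ‖(q : ℂ) • (a i * star (a i))‖ := norm_add_le _ _
    _ ≤ 1 + |q| * (t * t) := by
        have h1 : ‖(1 : H →L[ℂ] H)‖ ≤ 1 := ContinuousLinearMap.norm_id_le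
        have h2 : ‖(q : ℂ) • (a i * star (a i))‖ = |q| * (t * t) := by
          rw [norm_smul, hC']
          simp [Complex.norm_real]
        linarith
  have hsq : t * t ≤ 1 / (1 - |q|) := by
    rw [le_div_iff₀ h1q]
    nlinarith
  have : t ≤ Real.sqrt (1 / (1 - |q|)) := by
    have := Real.sqrt_le_sqrt (le_of_eq (Real.sqrt_mul_self ht0).symm)
    nlinarith [Real.sq_sqrt (by positivity : (0:ℝ) ≤ 1 / (1 - |q|)),
      Real.sqrt_nonneg (1 / (1 - |q|)), hsq]
  calc t ≤ Real.sqrt (1 / (1 - |q|)) := this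
  _ = 1 / Real.sqrt (1 - |q|) := by
      rw [one_div, one_div, Real.sqrt_inv]
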